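/- arXiv:2206.07610 — 2 statements merged into one kernel-verified Lean document; each statement's English description precedes it below -/
import Mathlib

section
/- Let (G,·,∘) be a finite skew brace. If the number of characteristic subgroups of the group (G,·) equals the number of subgroups of the group (G,∘), then every subgroup of (G,∘) is a left ideal of (G,·,∘). -/
def IsSkewBrace {G : Type*} (dot circ : Group G) : Prop :=
  ∀ σ τ κ : G,
    circ.mul σ (dot.mul τ κ) =
      dot.mul (dot.mul (circ.mul σ τ) (dot.inv σ)) (circ.mul σ κ)

def gammaFun {G : Type*} (dot circ : Group G) (σ τ : G) : G :=
  dot.mul (dot.inv σ) (circ.mul σ τ)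

def IsSubgroupOf {G : Type*} (S : Group G) (H : Set G) : Prop :=
  S.one ∈ H ∧ (∀ a ∈ H, ∀ b ∈ H, S.mul a b ∈ H) ∧ (∀ a ∈ H, S.inv a ∈ H)

def IsLeftIdeal {G : Type*} (dot circ : Group G) (H : Set G) : Prop :=
  IsSubgroupOf dot H ∧ ∀ σ : G, ∀ τ ∈ H, gammaFun dot circ σ τ ∈ H

def IsStrongLeftIdeal {G : Type*} (dot circ : Group G) (H : Set G) : Prop :=
  IsLeftIdeal dot circ H ∧
    ∀ σ : G, ∀ τ ∈ H, dot.mul (dot.mul σ τ) (dot.inv σ) ∈ H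

def IsCharacteristicSubgroupOf {G : Type*} (S : Group G) (H : Set G) : Prop :=
  IsSubgroupOf S H ∧
    ∀ f : G ≃ G, (∀ a b : G, f (S.mul a b) = S.mul (f a) (f b)) → ∀ a ∈ H, f a ∈ H

def oppGroup {G : Type*} (dot : Group G) : Group G :=
  letI := dot
  { mul := fun a b => b * a
    one := (1 : G)
    inv := fun a => a⁻¹
    npow := @npowRec G ⟨(1 : G)⟩ ⟨fun a b => b * a⟩
    npow_zero := fun _ => rfl
    npow_succ := fun _ _ => rfl
    zpow := @zpowRec G ⟨(1 : G)⟩ ⟨fun a b => b * a⟩ ⟨fun a => a⁻¹⟩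
      (@npowRec G ⟨(1 : G)⟩ ⟨fun a b => b * a⟩)
    zpow_zero' := fun _ => rfl
    zpow_succ' := fun _ _ => rfl
    zpow_neg' := fun _ _ => rfl
    div := fun a b => b⁻¹ * a
    div_eq_mul_inv := fun _ _ => rfl
    mul_assoc := fun a b c => (mul_assoc c b a).symm
    one_mul := fun a => mul_one a
    mul_one := fun a => one_mul a
    inv_mul_cancel := fun a => mul_inv_cancel a }

def lam {G : Type*} (S : Group G) (σ : G) : Equiv.Perm G :=
  letI := S; Equiv.mulLeft σ

def rho {G : Type*} (S : Group G) (σ : G) : Equiv.Perm G :=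
  letI := S; Equiv.mulRight σ⁻¹

section Aux

variable {G : Type*} (dot circ : Group G)

lemma skb_one_eq (h : IsSkewBrace dot circ) : circ.one = dot.one := by
  letI := dot
  have key : ∀ σ : G, circ.mul σ dot.one = σ := by
    intro σ
    have := h σ dot.one dot.one
    have h1 : circ.mul σ (dot.mul dot.one dot.one) = circ.mul σ dot.one := by
      show circ.mul σ ((1:G) * 1) = circ.mul σ 1
      rw [one_mul]
    rw [h1] at this
    set x := circ.mul σ dot.one with hx
    have : (1:G) * x = (x * σ⁻¹) * x := by
      rw [one_mul]; exact this
    have h2 : (1:G) = x * σ⁻¹ := mul_right_cancel this.symm ▸ (mul_right_cancel this).symm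
    have h3 : x * σ⁻¹ = 1 := (mul_right_cancel this).symm
    calc x = x * σ⁻¹ * σ := by rw [inv_mul_cancel_right]
    _ = 1 * σ := by rw [h3]
    _ = σ := one_mul σ
  have h1 : circ.mul circ.one dot.one = dot.one := circ.one_mul dot.one
  have h2 : circ.mul circ.one dot.one = circ.one := key circ.one
  rw [h1] at h2; exact h2.symm

lemma skb_gamma_mul (h : IsSkewBrace dot circ) (σ τ κ : G) :
    gammaFun dot circ σ (dot.mul τ κ) =
      dot.mul (gammaFun dot circ σ τ) (gammaFun dot circ σ κ) := by
  letI := dot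
  show σ⁻¹ * circ.mul σ (dot.mul τ κ) = (σ⁻¹ * circ.mul σ τ) * (σ⁻¹ * circ.mul σ κ)
  rw [h σ τ κ]
  show σ⁻¹ * ((circ.mul σ τ * σ⁻¹) * circ.mul σ κ) = _
  simp [mul_assoc]

def gammaEquiv (σ : G) : G ≃ G := (lam circ σ).trans (lam dot (dot.inv σ))

lemma gammaEquiv_apply (σ τ : G) : gammaEquiv dot circ σ τ = gammaFun dot circ σ τ := rfl

lemma circ_mul_eq (σ τ : G) :
    circ.mul σ τ = dot.mul σ (gammaFun dot circ σ τ) := by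
  letI := dot
  show circ.mul σ τ = σ * (σ⁻¹ * circ.mul σ τ)
  rw [mul_inv_cancel_left]

lemma char_to_leftIdeal (h : IsSkewBrace dot circ) {H : Set G}
    (hH : IsCharacteristicSubgroupOf dot H) : IsLeftIdeal dot circ H := by
  refine ⟨hH.1, fun σ τ hτ => ?_⟩
  have := hH.2 (gammaEquiv dot circ σ)
    (fun a b => by rw [gammaEquiv_apply, gammaEquiv_apply, gammaEquiv_apply,
      skb_gamma_mul dot circ h]) τ hτ
  rwa [gammaEquiv_apply] at this

lemma leftIdeal_to_circSubgroup [Finite G] (h : IsSkewBrace dot circ) {H : Set G}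
    (hH : IsLeftIdeal dot circ H) : IsSubgroupOf circ H := by
  obtain ⟨⟨h1, hmul, hinv⟩, hgamma⟩ := hH
  refine ⟨by rw [skb_one_eq dot circ h]; exact h1, ?_, ?_⟩
  · intro a ha b hb
    rw [circ_mul_eq dot circ]
    exact hmul a ha _ (hgamma a b hb)
  · intro a ha
    have hmaps : Set.MapsTo (gammaFun dot circ a) H H := fun τ hτ => hgamma a τ hτ
    have hinj : Set.InjOn (gammaFun dot circ a) H :=
      Set.injOn_of_injective (fun x y hxy => by
        have : gammaEquiv dot circ a x = gammaEquiv dot circ a y := by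
          rw [gammaEquiv_apply, gammaEquiv_apply]; exact hxy
        exact (gammaEquiv dot circ a).injective this)
    have hsurj : Set.SurjOn (gammaFun dot circ a) H H :=
      ((Set.Finite.injOn_iff_bijOn_of_mapsTo (Set.toFinite H) hmaps).1 hinj).surjOn
    obtain ⟨b, hb, hab⟩ := hsurj (hinv a ha)
    have hone : circ.mul a b = circ.one := by
      letI := dot
      have : a⁻¹ * circ.mul a b = a⁻¹ := hab
      have h2 : circ.mul a b = (1:G) := by
        have := congrArg (fun z => a * z) this
        simpa [mul_inv_cancel_left, mul_inv_cancel] using this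
      rw [h2, skb_one_eq dot circ h]; rfl
    have : circ.inv a = b := by
      letI := circ
      exact inv_eq_of_mul_eq_one_right hone
    rw [this]; exact hb

end Aux

/-- For a finite skew brace `(G,·,∘)`, if the number of characteristic
subgroups of `(G,·)` equals the number of subgroups of `(G,∘)`, then every subgroup of
`(G,∘)` is a left ideal of `(G,·,∘)`. -/
theorem stmt15 {G : Type*} [Finite G] (dot circ : Group G) (h : IsSkewBrace dot circ)
    (hnum : Nat.card {H : Set G // IsCharacteristicSubgroupOf dot H} =
            Nat.card {H : Set G // IsSubgroupOf circ H}) :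
    ∀ H : Set G, IsSubgroupOf circ H → IsLeftIdeal dot circ H := by

  intro H hH
  let phi : {H : Set G // IsCharacteristicSubgroupOf dot H} →
      {H : Set G // IsSubgroupOf circ H} :=
    fun K => ⟨K.1, leftIdeal_to_circSubgroup dot circ h (char_to_leftIdeal dot circ h K.2)⟩
  have hinj : Function.Injective phi := fun a b hab => by
    have h2 := congrArg Subtype.val hab
    exact Subtype.ext h2
  have hbij : Function.Bijective phi :=
    (Nat.bijective_iff_injective_and_card phi).2 ⟨hinj, hnum⟩
  obtain ⟨⟨K, hK⟩, hKH⟩ := hbij.2 ⟨H, hH⟩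
  have hKeq : K = H := congrArg Subtype.val hKH
  exact hKeq ▸ char_to_leftIdeal dot circ h hK
end

section
/- Let (G,∘) be a cyclic group of order 2ᵐ for some m ≥ 1. Then for every group operation · on G such that (G,·,∘) is a skew brace, every subgroup of (G,∘) is a left ideal of (G,·,∘). -/
namespace Stmt19Aux

variable {G : Type*}

/-! ### raw group lemmas -/

theorem rmul_assoc (S : Group G) (a b c : G) :
    S.mul (S.mul a b) c = S.mul a (S.mul b c) := by letI := S; exact mul_assoc a b c

theorem rone_mul (S : Group G) (a : G) : S.mul S.one a = a := by letI := S; exact one_mul a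

theorem rmul_one (S : Group G) (a : G) : S.mul a S.one = a := by letI := S; exact mul_one a

theorem rinv_mul (S : Group G) (a : G) : S.mul (S.inv a) a = S.one := by
  letI := S; exact inv_mul_cancel a

theorem rmul_inv (S : Group G) (a : G) : S.mul a (S.inv a) = S.one := by
  letI := S; exact mul_inv_cancel a

theorem rinv_mul_cancel_left (S : Group G) (a b : G) :
    S.mul (S.inv a) (S.mul a b) = b := by letI := S; exact inv_mul_cancel_left a b

theorem rmul_inv_cancel_left (S : Group G) (a b : G) :
    S.mul a (S.mul (S.inv a) b) = b := by letI := S; exact mul_inv_cancel_left a b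

theorem rmul_left_cancel (S : Group G) {a b c : G} (h : S.mul a b = S.mul a c) : b = c := by
  letI := S; exact mul_left_cancel (a := a) h

theorem rinv_one (S : Group G) : S.inv S.one = S.one := by letI := S; exact inv_one

theorem rinv_rev (S : Group G) (a b : G) :
    S.inv (S.mul a b) = S.mul (S.inv b) (S.inv a) := by letI := S; exact mul_inv_rev a b

theorem rinv_eq_of_mul (S : Group G) {a b : G} (h : S.mul a b = S.one) : b = S.inv a := by
  letI := S; exact eq_inv_of_mul_eq_one_right h

end Stmt19Aux

namespace Stmt19Aux
section Brace
variable {G : Type*} (dot circ : Group G) (hsb : IsSkewBrace dot circ)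
include hsb

theorem sb_mul_dot_one (σ : G) : circ.mul σ dot.one = σ := by
  have h := hsb σ dot.one dot.one
  rw [rone_mul dot] at h
  rw [rmul_assoc dot] at h
  have h3 : dot.mul (circ.mul σ dot.one) dot.one
      = dot.mul (circ.mul σ dot.one) (dot.mul (dot.inv σ) (circ.mul σ dot.one)) := by
    rw [rmul_one dot]; exact h
  have h4 := (rmul_left_cancel dot h3).symm
  -- h4 : dot.mul (dot.inv σ) (circ.mul σ dot.one) = dot.one
  have h5 : dot.mul σ (dot.mul (dot.inv σ) (circ.mul σ dot.one)) = dot.mul σ dot.one := by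
    rw [h4]
  rw [rmul_inv_cancel_left dot, rmul_one dot] at h5
  exact h5

theorem sb_one_eq : circ.one = dot.one := by
  have := sb_mul_dot_one dot circ hsb circ.one
  rw [rone_mul circ] at this
  exact this.symm

theorem g_mul (σ τ κ : G) :
    gammaFun dot circ σ (dot.mul τ κ)
      = dot.mul (gammaFun dot circ σ τ) (gammaFun dot circ σ κ) := by
  unfold gammaFun
  rw [hsb σ τ κ, rmul_assoc dot (circ.mul σ τ), ← rmul_assoc dot (dot.inv σ)]

theorem g_one (σ : G) : gammaFun dot circ σ dot.one = dot.one := by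
  unfold gammaFun
  rw [sb_mul_dot_one dot circ hsb, rinv_mul dot]

theorem g_inv (σ τ : G) :
    gammaFun dot circ σ (dot.inv τ) = dot.inv (gammaFun dot circ σ τ) := by
  apply rinv_eq_of_mul dot
  rw [← g_mul dot circ hsb, rmul_inv dot, g_one dot circ hsb]

theorem g_circ_one (τ : G) : gammaFun dot circ circ.one τ = τ := by
  unfold gammaFun
  rw [rone_mul circ, sb_one_eq dot circ hsb, rinv_one dot, rone_mul dot]

theorem circ_eq_dot_gamma (σ τ : G) :
    circ.mul σ τ = dot.mul σ (gammaFun dot circ σ τ) := by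
  unfold gammaFun; rw [rmul_inv_cancel_left dot]

theorem g_comp (σ σ' τ : G) :
    gammaFun dot circ (circ.mul σ σ') τ
      = gammaFun dot circ σ (gammaFun dot circ σ' τ) := by
  have hZ : circ.mul (circ.mul σ σ') τ = circ.mul σ (circ.mul σ' τ) := rmul_assoc circ σ σ' τ
  have hlhs : gammaFun dot circ (circ.mul σ σ') τ
      = dot.mul (dot.mul (dot.inv (gammaFun dot circ σ σ')) (dot.inv σ))
          (circ.mul σ (circ.mul σ' τ)) := by
    show dot.mul (dot.inv (circ.mul σ σ')) (circ.mul (circ.mul σ σ') τ) = _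
    rw [hZ, circ_eq_dot_gamma dot circ hsb σ σ', rinv_rev dot]
  have hrhs : gammaFun dot circ σ (gammaFun dot circ σ' τ)
      = dot.mul (dot.mul (dot.inv (gammaFun dot circ σ σ')) (dot.inv σ))
          (circ.mul σ (circ.mul σ' τ)) := by
    show dot.mul (dot.inv σ) (circ.mul σ (dot.mul (dot.inv σ') (circ.mul σ' τ))) = _
    rw [hsb σ (dot.inv σ') (circ.mul σ' τ)]
    have hso : circ.mul σ (dot.inv σ') = dot.mul σ (dot.inv (gammaFun dot circ σ σ')) := by
      rw [circ_eq_dot_gamma dot circ hsb σ (dot.inv σ'), g_inv dot circ hsb]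
    rw [hso, rmul_assoc dot σ, rmul_assoc dot σ, rinv_mul_cancel_left dot]
  rw [hlhs, hrhs]

theorem g_cancel (σ : G) {τ τ' : G} (h : gammaFun dot circ σ τ = gammaFun dot circ σ τ') :
    τ = τ' := by
  unfold gammaFun at h
  exact rmul_left_cancel circ (rmul_left_cancel dot h)

end Brace
end Stmt19Aux

namespace Stmt19Aux

/-! ### combinatorial lemmas -/

theorem even_card_of_pairing {α : Type*} [DecidableEq α] (f : α → α) :
    ∀ (n : ℕ) (s : Finset α), s.card = n → (∀ a ∈ s, f a ∈ s) → (∀ a ∈ s, f (f a) = a) →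
      (∀ a ∈ s, f a ≠ a) → Even s.card := by
  intro n
  induction n using Nat.strong_induction_on with
  | _ n ih =>
    intro s hn hmap hinv hne
    rcases Finset.eq_empty_or_nonempty s with rfl | ⟨a, ha⟩
    · simp
    · have hfa := hmap a ha
      have hnea := hne a ha
      have hfa' : f a ∈ s.erase a := Finset.mem_erase.mpr ⟨hnea, hfa⟩
      set t := (s.erase a).erase (f a) with ht
      have hcardt : t.card = s.card - 2 := by
        rw [ht, Finset.card_erase_of_mem hfa', Finset.card_erase_of_mem ha]
        omega
      have hts : ∀ x ∈ t, x ∈ s := fun x hx =>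
        Finset.mem_of_mem_erase (Finset.mem_of_mem_erase hx)
      have hmemt : ∀ x, x ∈ t ↔ x ≠ f a ∧ x ≠ a ∧ x ∈ s := by
        intro x
        rw [ht, Finset.mem_erase, Finset.mem_erase]
      have hmapt : ∀ x ∈ t, f x ∈ t := by
        intro x hx
        obtain ⟨hxfa, hxa, hxs⟩ := (hmemt x).mp hx
        refine (hmemt (f x)).mpr ⟨?_, ?_, hmap x hxs⟩
        · intro h
          exact hxa (by rw [← hinv x hxs, h, hinv a ha])
        · intro h
          exact hxfa (by rw [← hinv x hxs, h])
      have hcard2 : 2 ≤ s.card := by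
        have : ({a, f a} : Finset α) ⊆ s := by
          intro x hx
          rcases Finset.mem_insert.mp hx with rfl | hx
          · exact ha
          · rw [Finset.mem_singleton.mp hx]; exact hfa
        have hle := Finset.card_le_card this
        rwa [Finset.card_insert_of_notMem (by simpa using (Ne.symm hnea)),
          Finset.card_singleton] at hle
      have hlt : t.card < n := by omega
      have heven := ih t.card hlt t rfl hmapt
        (fun x hx => hinv x (hts x hx)) (fun x hx => hne x (hts x hx))
      obtain ⟨r, hr⟩ := heven
      exact ⟨r + 1, by omega⟩

theorem exists_fixed {α : Type*} [DecidableEq α] (φ : α → α) (one : α) (hone : φ one = one) :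
    ∀ (e : ℕ) (s : Finset α), (∀ a ∈ s, φ a ∈ s) → (∀ a ∈ s, φ^[2^e] a = a) →
      one ∈ s → Even s.card → ∃ w ∈ s, w ≠ one ∧ φ w = w := by
  intro e
  induction e with
  | zero =>
    intro s hmap hfix hones heven
    have hall : ∀ a ∈ s, φ a = a := by
      intro a ha
      simpa using hfix a ha
    have h1 : 1 < s.card := by
      have hpos : 0 < s.card := Finset.card_pos.mpr ⟨one, hones⟩
      rcases heven with ⟨r, hr⟩
      omega
    obtain ⟨w, hw, hwne⟩ := Finset.exists_mem_ne h1 one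
    exact ⟨w, hw, hwne, hall w hw⟩
  | succ e ih =>
    intro s hmap hfix hones heven
    have hmapiter : ∀ (k : ℕ), ∀ a ∈ s, φ^[k] a ∈ s := by
      intro k
      induction k with
      | zero => intro a ha; simpa using ha
      | succ k ihk =>
        intro a ha
        rw [Function.iterate_succ_apply']
        exact hmap _ (ihk a ha)
    set ψ := φ^[2^e] with hψ
    have hψψ : ∀ a ∈ s, ψ (ψ a) = a := by
      intro a ha
      have h2 : (2:ℕ)^(e+1) = 2^e + 2^e := by ring
      have := hfix a ha
      rwa [h2, Function.iterate_add_apply] at this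
    classical
    set s' := s.filter (fun x => ψ x = x) with hs'
    have hs'mem : ∀ x, x ∈ s' ↔ x ∈ s ∧ ψ x = x := by
      intro x; rw [hs', Finset.mem_filter]
    have hcommute : ∀ a, ψ (φ a) = φ (ψ a) := by
      intro a
      exact (Function.iterate_succ_apply φ (2^e) a).symm.trans
        (Function.iterate_succ_apply' φ (2^e) a)
    -- evenness of the complement
    set sc := s.filter (fun x => ¬ ψ x = x) with hsc
    have hscmem : ∀ x, x ∈ sc ↔ x ∈ s ∧ ψ x ≠ x := by
      intro x; rw [hsc, Finset.mem_filter]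
    have hscmap : ∀ a ∈ sc, ψ a ∈ sc := by
      intro a hasc
      obtain ⟨has, hane⟩ := (hscmem a).mp hasc
      refine (hscmem (ψ a)).mpr ⟨hmapiter _ a has, ?_⟩
      intro h
      exact hane (h.symm.trans (hψψ a has))
    have hsceven : Even sc.card :=
      even_card_of_pairing ψ sc.card sc rfl hscmap
        (fun a hasc => hψψ a ((hscmem a).mp hasc).1)
        (fun a hasc => ((hscmem a).mp hasc).2)
    have hsplit : s'.card + sc.card = s.card := by
      rw [hs', hsc]
      exact Finset.card_filter_add_card_filter_not _
    have hs'even : Even s'.card := by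
      obtain ⟨r, hr⟩ := heven
      obtain ⟨q, hq⟩ := hsceven
      exact ⟨r - q, by omega⟩
    have hres := ih s'
      (by
        intro a ha
        obtain ⟨has, hafix⟩ := (hs'mem a).mp ha
        exact (hs'mem (φ a)).mpr ⟨hmap a has, by rw [hcommute, hafix]⟩)
      (by
        intro a ha
        exact ((hs'mem a).mp ha).2)
      ((hs'mem one).mpr ⟨hones, Function.iterate_fixed hone _⟩)
      hs'even
    obtain ⟨w, hw, hwne, hwfix⟩ := hres
    exact ⟨w, ((hs'mem w).mp hw).1, hwne, hwfix⟩

/-! ### 2-group lemmas (with instances) -/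

theorem exists_invol_zpowers {H : Type*} [Group H] [Finite H] {n : ℕ}
    (hc : Nat.card H = 2 ^ n) {y : H} (hy : y ≠ 1) :
    ∃ z ∈ Subgroup.zpowers y, z ≠ 1 ∧ z * z = 1 := by
  have hdvd : orderOf y ∣ 2 ^ n := hc ▸ orderOf_dvd_natCard y
  obtain ⟨r, hrn, ho⟩ := (Nat.dvd_prime_pow Nat.prime_two).mp hdvd
  have hr0 : r ≠ 0 := by
    rintro rfl
    rw [pow_zero] at ho
    exact hy (orderOf_eq_one_iff.mp ho)
  refine ⟨y ^ (2 ^ (r - 1)), ⟨((2 ^ (r - 1) : ℕ) : ℤ), zpow_natCast y (2 ^ (r - 1))⟩, ?_, ?_⟩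
  · intro h
    have hdvd2 : orderOf y ∣ 2 ^ (r-1) := orderOf_dvd_of_pow_eq_one h
    rw [ho] at hdvd2
    have := (Nat.pow_dvd_pow_iff_le_right (Nat.one_lt_two)).mp hdvd2
    omega
  · rw [← pow_add]
    have h2 : 2 ^ (r-1) + 2 ^ (r-1) = 2 ^ r := by
      have hr : r - 1 + 1 = r := by omega
      calc 2 ^ (r-1) + 2 ^ (r-1) = 2 ^ (r-1) * 2 := by ring
        _ = 2 ^ (r-1+1) := (pow_succ 2 (r-1)).symm
        _ = 2 ^ r := by rw [hr]
    rw [h2, ← ho, pow_orderOf_eq_one]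

theorem unique_invol {H : Type*} [Group H] [Finite H] {n : ℕ} (hc : Nat.card H = 2 ^ n)
    {g : H} (hg : ∀ x : H, x ∈ Subgroup.zpowers g) {x y : H}
    (hx1 : x ≠ 1) (hx : x * x = 1) (hy1 : y ≠ 1) (hy : y * y = 1) : x = y := by
  have hn : n ≠ 0 := by
    rintro rfl
    rw [pow_zero] at hc
    obtain ⟨hsub, -⟩ := Nat.card_eq_one_iff_unique.mp hc
    exact hx1 (Subsingleton.elim x 1)
  have ho : orderOf g = 2 ^ n := (orderOf_eq_card_of_forall_mem_zpowers hg).trans hc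
  suffices hkey : ∀ u : H, u ≠ 1 → u * u = 1 → u = g ^ ((2:ℤ) ^ (n - 1)) by
    rw [hkey x hx1 hx, hkey y hy1 hy]
  intro u hu1 hu
  obtain ⟨k, hk⟩ := Subgroup.mem_zpowers_iff.mp (hg u)
  have h2k : g ^ (k + k) = 1 := by rw [zpow_add, hk, hu]
  have hdvd : ((orderOf g : ℤ)) ∣ (k + k) := orderOf_dvd_iff_zpow_eq_one.mpr h2k
  rw [ho] at hdvd
  have hcast : ((2 ^ n : ℕ) : ℤ) = 2 * 2 ^ (n - 1) := by
    push_cast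
    rw [← pow_succ']
    congr 1
    omega
  rw [hcast] at hdvd
  have hdvd' : ((2:ℤ) ^ (n - 1)) ∣ k := by
    have h2 : (2:ℤ) * 2 ^ (n-1) ∣ 2 * k := by rw [two_mul k]; exact hdvd
    exact (mul_dvd_mul_iff_left (by norm_num : (2:ℤ) ≠ 0)).mp h2
  obtain ⟨j, hj⟩ := hdvd'
  have hcc : g ^ ((2:ℤ) ^ (n-1)) * g ^ ((2:ℤ) ^ (n-1)) = 1 := by
    rw [← zpow_add]
    have h2 : (2:ℤ) ^ (n-1) + 2 ^ (n-1) = ((2 ^ n : ℕ) : ℤ) := by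
      rw [hcast]; ring
    rw [h2]
    exact orderOf_dvd_iff_zpow_eq_one.mp (by rw [ho])
  set c := g ^ ((2:ℤ) ^ (n-1)) with hcdef
  have hu' : u = c ^ j := by
    rw [← hk, hj, hcdef, ← zpow_mul]
  have hc2 : c ^ (2:ℤ) = 1 := by
    rw [show (2:ℤ) = 1 + 1 from rfl, zpow_add, zpow_one]
    exact hcc
  rcases Int.even_or_odd j with ⟨t, ht⟩ | ⟨t, ht⟩
  · exfalso
    apply hu1
    rw [hu', ht, ← two_mul, zpow_mul, hc2, one_zpow]
  · rw [hu', ht, zpow_add, zpow_one, zpow_mul, hc2, one_zpow, one_mul]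

end Stmt19Aux

namespace Stmt19Aux
section Brace2
variable {G : Type*} (dot circ : Group G) (hsb : IsSkewBrace dot circ)
include hsb

theorem g_npow_iterate (g : G) (n : ℕ) (τ : G) :
    gammaFun dot circ (circ.npow n g) τ = (gammaFun dot circ g)^[n] τ := by
  induction n with
  | zero =>
    have h0 : circ.npow 0 g = circ.one := by letI := circ; exact pow_zero g
    rw [h0, Function.iterate_zero_apply]
    exact g_circ_one dot circ hsb τ
  | succ n ihn =>
    have hs : circ.npow (n+1) g = circ.mul g (circ.npow n g) := by
      letI := circ; exact pow_succ' g n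
    rw [hs, g_comp dot circ hsb, ihn]
    exact (Function.iterate_succ_apply' _ n τ).symm

theorem g_fix_all [Finite G] {g w : G}
    (hg : ∀ x : G, ∃ k : ℤ, x = circ.zpow k g)
    (hfix : gammaFun dot circ g w = w) : ∀ σ, gammaFun dot circ σ w = w := by
  letI := circ
  have hone : gammaFun dot circ (1 : G) w = w := g_circ_one dot circ hsb w
  let K : Subgroup G :=
    { carrier := {σ | gammaFun dot circ σ w = w}
      one_mem' := hone
      mul_mem' := by
        intro a b ha hb
        simp only [Set.mem_setOf_eq] at *
        have h : gammaFun dot circ (a * b) w = gammaFun dot circ a (gammaFun dot circ b w) :=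
          g_comp dot circ hsb a b w
        rw [h, hb, ha]
      inv_mem' := by
        intro a ha
        simp only [Set.mem_setOf_eq] at *
        have h : gammaFun dot circ (a⁻¹ * a) w = gammaFun dot circ a⁻¹ (gammaFun dot circ a w) :=
          g_comp dot circ hsb a⁻¹ a w
        rw [inv_mul_cancel, hone, ha] at h
        exact h.symm }
  intro σ
  obtain ⟨k, hk⟩ := hg σ
  have hgK : g ∈ K := hfix
  have : σ ∈ K := by
    rw [hk]
    exact K.zpow_mem hgK k
  exact this

end Brace2

theorem exists_central_invol {G : Type*} [Finite G] (dot : Group G) {n : ℕ} (hn : n ≠ 0)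
    (hcard : Nat.card G = 2 ^ n) :
    ∃ y : G, y ≠ dot.one ∧ dot.mul y y = dot.one ∧ ∀ u, dot.mul y u = dot.mul u y := by
  letI := dot
  have hfact : Fact (Nat.Prime 2) := ⟨Nat.prime_two⟩
  have hnt : Nontrivial G := by
    rw [← Finite.one_lt_card_iff_nontrivial]
    rw [hcard]
    exact Nat.one_lt_two_pow hn
  have hp : IsPGroup 2 G := IsPGroup.of_card hcard
  have hcz : Nontrivial (Subgroup.center G) := hp.center_nontrivial
  obtain ⟨c, hc⟩ := exists_ne (1 : Subgroup.center G)
  have hc1 : (c : G) ≠ 1 := fun h => hc (Subtype.ext h)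
  obtain ⟨z, hzmem, hz1, hzz⟩ := exists_invol_zpowers hcard hc1
  have hzc : z ∈ Subgroup.center G := by
    have hle : Subgroup.zpowers (c : G) ≤ Subgroup.center G := Subgroup.zpowers_le.mpr c.2
    exact hle hzmem
  exact ⟨z, hz1, hzz, fun u => (Subgroup.mem_center_iff.mp hzc u).symm⟩

def subOf {G : Type*} (circ : Group G) (H : Set G) (h : IsSubgroupOf circ H) :
    @Subgroup G circ :=
  letI := circ
  { carrier := H
    one_mem' := h.1
    mul_mem' := fun {a b} ha hb => h.2.1 a ha b hb
    inv_mem' := fun {a} ha => h.2.2 a ha }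

end Stmt19Aux

namespace Stmt19Aux

theorem aux : ∀ (m : ℕ) {G : Type u} [Finite G] (circ : Group G),
    Nat.card G = 2 ^ m → (∃ g : G, ∀ x : G, ∃ k : ℤ, x = circ.zpow k g) →
    ∀ dot : Group G, IsSkewBrace dot circ →
      ∀ H : Set G, IsSubgroupOf circ H → IsLeftIdeal dot circ H := by
  intro m
  induction m with
  | zero =>
    intro G _ circ hcard hcyc dot hsb H hH
    have hsub : Subsingleton G := by
      rw [pow_zero] at hcard
      exact (Nat.card_eq_one_iff_unique.mp hcard).1
    constructor
    · refine ⟨?_, ?_, ?_⟩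
      · rw [Subsingleton.elim dot.one circ.one]; exact hH.1
      · intro a ha b _; rw [Subsingleton.elim (dot.mul a b) a]; exact ha
      · intro a ha; rw [Subsingleton.elim (dot.inv a) a]; exact ha
    · intro σ τ hτ; rw [Subsingleton.elim (gammaFun dot circ σ τ) τ]; exact hτ
  | succ m IH =>
    intro G _ circ hcard hcyc dot hsb H hH
    obtain ⟨g, hg⟩ := hcyc
    by_cases hHtriv : ∀ x ∈ H, x = circ.one
    · constructor
      · refine ⟨?_, ?_, ?_⟩
        · rw [← sb_one_eq dot circ hsb]; exact hH.1
        · intro a ha b hb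
          rw [hHtriv a ha, hHtriv b hb, sb_one_eq dot circ hsb, rone_mul dot,
            ← sb_one_eq dot circ hsb]
          exact hH.1
        · intro a ha
          rw [hHtriv a ha, sb_one_eq dot circ hsb, rinv_one dot, ← sb_one_eq dot circ hsb]
          exact hH.1
      · intro σ τ hτ
        rw [hHtriv τ hτ, sb_one_eq dot circ hsb, g_one dot circ hsb,
          ← sb_one_eq dot circ hsb]
        exact hH.1
    · push_neg at hHtriv
      obtain ⟨h₀, hh₀H, hh₀⟩ := hHtriv
      classical
      letI := circ
      letI : Fintype G := Fintype.ofFinite G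
      have hgmem : ∀ x : G, x ∈ Subgroup.zpowers g := by
        intro x
        obtain ⟨k, hk⟩ := hg x
        exact Subgroup.mem_zpowers_iff.mpr ⟨k, hk.symm⟩
      have hordg : orderOf g = 2 ^ (m + 1) :=
        (orderOf_eq_card_of_forall_mem_zpowers hgmem).trans hcard
      -- circ-involution inside H
      obtain ⟨z₀, hz₀mem, hz₀1, hz₀z⟩ := exists_invol_zpowers hcard hh₀
      have hz₀H : z₀ ∈ H := by
        have hle : Subgroup.zpowers h₀ ≤ subOf circ H hH := Subgroup.zpowers_le.mpr hh₀H
        exact hle hz₀mem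
      -- central dot-involution
      obtain ⟨y₀, hy₀1, hy₀y, hy₀c⟩ :=
        exists_central_invol dot (Nat.succ_ne_zero m) hcard
      -- the fixed central involution w
      set φ : G → G := gammaFun dot circ g with hφdef
      set Ω : Finset G := Finset.univ.filter
        (fun x => dot.mul x x = dot.one ∧ ∀ u, dot.mul x u = dot.mul u x) with hΩdef
      have hΩmem : ∀ x, x ∈ Ω ↔ (dot.mul x x = dot.one ∧ ∀ u, dot.mul x u = dot.mul u x) := by
        intro x
        rw [hΩdef, Finset.mem_filter]
        exact ⟨fun h => h.2, fun h => ⟨Finset.mem_univ x, h⟩⟩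
      have hφsurj : Function.Surjective φ :=
        Finite.injective_iff_surjective.mp (fun τ τ' h => g_cancel dot circ hsb g h)
      have hφΩ : ∀ x ∈ Ω, φ x ∈ Ω := by
        intro x hx
        obtain ⟨hx2, hxc⟩ := (hΩmem x).mp hx
        refine (hΩmem (φ x)).mpr ⟨?_, ?_⟩
        · rw [hφdef, ← g_mul dot circ hsb g x x, hx2]
          exact g_one dot circ hsb g
        · intro u
          obtain ⟨v, rfl⟩ := hφsurj u
          rw [hφdef, ← g_mul dot circ hsb g x v, ← g_mul dot circ hsb g v x, hxc v]
      have hΩone : dot.one ∈ Ω := by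
        refine (hΩmem dot.one).mpr ⟨rone_mul dot dot.one, ?_⟩
        intro u
        rw [rone_mul dot u, rmul_one dot u]
      have hΩeven : Even Ω.card := by
        refine even_card_of_pairing (fun x => dot.mul x y₀) Ω.card Ω rfl ?_ ?_ ?_
        · intro x hx
          obtain ⟨hx2, hxc⟩ := (hΩmem x).mp hx
          refine (hΩmem (dot.mul x y₀)).mpr ⟨?_, ?_⟩
          · rw [rmul_assoc dot x y₀ (dot.mul x y₀), hy₀c (dot.mul x y₀),
              rmul_assoc dot x y₀ y₀, hy₀y, rmul_one dot]
            exact hx2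
          · intro u
            rw [rmul_assoc dot x y₀ u, hy₀c u, ← rmul_assoc dot x u y₀, hxc u,
              rmul_assoc dot u x y₀]
        · intro x hx
          show dot.mul (dot.mul x y₀) y₀ = x
          rw [rmul_assoc dot x y₀ y₀, hy₀y, rmul_one dot]
        · intro x _ h
          apply hy₀1
          have h2 : dot.mul x y₀ = dot.mul x dot.one := by rw [rmul_one dot]; exact h
          exact rmul_left_cancel dot h2
      have hφfixiter : ∀ x, φ^[2 ^ (m + 1)] x = x := by
        intro x
        rw [hφdef, ← g_npow_iterate dot circ hsb g (2 ^ (m + 1)) x]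
        have hpow : circ.npow (2 ^ (m + 1)) g = circ.one := by
          show g ^ (2 ^ (m + 1)) = 1
          rw [← hordg]
          exact pow_orderOf_eq_one g
        rw [hpow]
        exact g_circ_one dot circ hsb x
      obtain ⟨w, hwΩ, hw1, hwfix⟩ := exists_fixed φ dot.one (g_one dot circ hsb g)
        (m + 1) Ω hφΩ (fun a _ => hφfixiter a) hΩone hΩeven
      obtain ⟨hww, hwc⟩ := (hΩmem w).mp hwΩ
      have hwfixall : ∀ σ, gammaFun dot circ σ w = w := g_fix_all dot circ hsb hg hwfix
      have hmulw : ∀ u, dot.mul u w = circ.mul u w := by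
        intro u
        rw [circ_eq_dot_gamma dot circ hsb u w, hwfixall u]
      have hw1' : w ≠ (1 : G) := fun h => hw1 (h.trans (sb_one_eq dot circ hsb))
      have hwcirc : (w * w : G) = 1 := by
        have h1 : circ.mul w w = dot.one := by rw [← hmulw w]; exact hww
        exact h1.trans (sb_one_eq dot circ hsb).symm
      have hwH : w ∈ H := by
        have heq : w = z₀ := unique_invol hcard hgmem hw1' hwcirc hz₀1 hz₀z
        rw [heq]; exact hz₀H
      -- commutativity of circ
      have hcomm : ∀ x y : G, x * y = y * x := by
        intro x y
        obtain ⟨j, hj⟩ := hg x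
        obtain ⟨k, hk⟩ := hg y
        rw [hj, hk]
        show g ^ j * g ^ k = g ^ k * g ^ j
        rw [← zpow_add, ← zpow_add, add_comm]
      -- the squaring map
      set sq : G → G := fun x => x * x with hsqdef
      have sq_mul : ∀ x y : G, sq (x * y) = sq x * sq y := by
        intro x y
        show (x * y) * (x * y) = (x * x) * (y * y)
        rw [mul_assoc x y (x * y), ← mul_assoc y x y, hcomm y x, mul_assoc x y y,
          ← mul_assoc]
      have sq_one : sq (1 : G) = 1 := mul_one 1
      have sq_inv : ∀ x : G, sq x⁻¹ = (sq x)⁻¹ := by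
        intro x
        show x⁻¹ * x⁻¹ = (x * x)⁻¹
        rw [mul_inv_rev]
      have sq_zpow : ∀ k : ℤ, sq (g ^ k) = (sq g) ^ k := by
        intro k
        show (g ^ k) * (g ^ k) = (g * g) ^ k
        exact ((Commute.refl g).mul_zpow k).symm
      have sq_mul_w : ∀ u : G, sq (dot.mul u w) = sq u := by
        intro u
        rw [hmulw u]
        show sq (u * w) = sq u
        rw [sq_mul]
        show sq u * (w * w) = sq u
        rw [hwcirc, mul_one]
      have fib : ∀ x y : G, sq x = sq y → y = x ∨ y = dot.mul x w := by
        intro x y hxy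
        by_cases hyx : y = x
        · exact Or.inl hyx
        · right
          have hdd : (x⁻¹ * y) * (x⁻¹ * y) = 1 := by
            have h1 : sq (x⁻¹ * y) = sq x⁻¹ * sq y := sq_mul x⁻¹ y
            rw [sq_inv, ← hxy, inv_mul_cancel] at h1
            exact h1
          have hd1 : x⁻¹ * y ≠ 1 := fun h => hyx (by
            have := inv_mul_eq_one.mp h
            exact this.symm)
          have hdw : x⁻¹ * y = w := unique_invol hcard hgmem hd1 hdd hw1' hwcirc
          rw [hmulw x]
          show y = x * w
          rw [← hdw, mul_inv_cancel_left]
      -- the subgroup M of squares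
      set Msub : Subgroup G := Subgroup.zpowers (sq g) with hMsubdef
      have hmk : ∀ x : G, sq x ∈ Msub := by
        intro x
        obtain ⟨k, hk⟩ := hg x
        have hx : sq x = (sq g) ^ k := by rw [hk]; exact sq_zpow k
        exact Subgroup.mem_zpowers_iff.mpr ⟨k, hx.symm⟩
      have hrange : ∀ t : ↥Msub, ∃ x : G, sq x = ↑t := by
        intro t
        obtain ⟨k, hk⟩ := Subgroup.mem_zpowers_iff.mp t.2
        exact ⟨g ^ k, (sq_zpow k).trans hk⟩
      choose p hp using hrange
      set circT : Group ↥Msub := inferInstance with hcircT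
      have hsurjT : ∀ t : ↥Msub, ∃ x : G, t = ⟨sq x, hmk x⟩ := by
        intro t
        exact ⟨p t, (Subtype.ext (hp t)).symm⟩
      -- congruence lemmas
      have sqmul_congr : ∀ a a' b b' : G, sq a = sq a' → sq b = sq b' →
          sq (dot.mul a b) = sq (dot.mul a' b') := by
        have left : ∀ a a' b : G, sq a = sq a' → sq (dot.mul a b) = sq (dot.mul a' b) := by
          intro a a' b h
          rcases fib a a' h with rfl | rfl
          · rfl
          · have he : dot.mul (dot.mul a w) b = dot.mul (dot.mul a b) w := by
              rw [rmul_assoc dot a w b, hwc b, ← rmul_assoc dot]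
            rw [he, sq_mul_w]
        have right : ∀ a b b' : G, sq b = sq b' → sq (dot.mul a b) = sq (dot.mul a b') := by
          intro a b b' h
          rcases fib b b' h with rfl | rfl
          · rfl
          · have he : dot.mul a (dot.mul b w) = dot.mul (dot.mul a b) w := by
              rw [rmul_assoc dot]
            rw [he, sq_mul_w]
        intro a a' b b' ha hb
        exact (left a a' b ha).trans (right a' b b' hb)
      have hwinv : dot.inv w = w := (rinv_eq_of_mul dot hww).symm
      have sqinv_congr : ∀ a a' : G, sq a = sq a' → sq (dot.inv a) = sq (dot.inv a') := by
        intro a a' h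
        rcases fib a a' h with rfl | rfl
        · rfl
        · have he : dot.inv (dot.mul a w) = dot.mul (dot.inv a) w := by
            rw [rinv_rev dot, hwinv, hwc (dot.inv a)]
          rw [he, sq_mul_w]
      -- the dot-group structure on M
      set dmul : ↥Msub → ↥Msub → ↥Msub :=
        fun s t => ⟨sq (dot.mul (p s) (p t)), hmk _⟩ with hdmuldef
      set dinv : ↥Msub → ↥Msub := fun t => ⟨sq (dot.inv (p t)), hmk _⟩ with hdinvdef
      set done : ↥Msub := ⟨sq dot.one, hmk _⟩ with hdonedef
      have hdmul : ∀ x y : G, dmul ⟨sq x, hmk x⟩ ⟨sq y, hmk y⟩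
          = ⟨sq (dot.mul x y), hmk (dot.mul x y)⟩ := by
        intro x y
        apply Subtype.ext
        show sq (dot.mul (p ⟨sq x, hmk x⟩) (p ⟨sq y, hmk y⟩)) = sq (dot.mul x y)
        exact sqmul_congr _ _ _ _ (hp ⟨sq x, hmk x⟩) (hp ⟨sq y, hmk y⟩)
      have hdinv : ∀ x : G, dinv ⟨sq x, hmk x⟩ = ⟨sq (dot.inv x), hmk (dot.inv x)⟩ := by
        intro x
        apply Subtype.ext
        show sq (dot.inv (p ⟨sq x, hmk x⟩)) = sq (dot.inv x)
        exact sqinv_congr _ _ (hp ⟨sq x, hmk x⟩)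
      have hdone : done = ⟨sq dot.one, hmk dot.one⟩ := rfl
      set dotM : Group ↥Msub :=
        { mul := dmul
          one := done
          inv := dinv
          npow := @npowRec _ ⟨done⟩ ⟨dmul⟩
          npow_zero := fun _ => rfl
          npow_succ := fun _ _ => rfl
          zpow := @zpowRec _ ⟨done⟩ ⟨dmul⟩ ⟨dinv⟩ (@npowRec _ ⟨done⟩ ⟨dmul⟩)
          zpow_zero' := fun _ => rfl
          zpow_succ' := fun _ _ => rfl
          zpow_neg' := fun _ _ => rfl
          div := fun s t => dmul s (dinv t)
          div_eq_mul_inv := fun _ _ => rfl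
          mul_assoc := by
            intro s t u
            apply Subtype.ext
            show sq (dot.mul (p (dmul s t)) (p u)) = sq (dot.mul (p s) (p (dmul t u)))
            have h1 : sq (p (dmul s t)) = sq (dot.mul (p s) (p t)) := hp (dmul s t)
            have h2 : sq (p (dmul t u)) = sq (dot.mul (p t) (p u)) := hp (dmul t u)
            calc sq (dot.mul (p (dmul s t)) (p u))
                = sq (dot.mul (dot.mul (p s) (p t)) (p u)) := sqmul_congr _ _ _ _ h1 rfl
              _ = sq (dot.mul (p s) (dot.mul (p t) (p u))) :=
                  congrArg sq (rmul_assoc dot _ _ _)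
              _ = sq (dot.mul (p s) (p (dmul t u))) := sqmul_congr _ _ _ _ rfl h2.symm
          one_mul := by
            intro t
            apply Subtype.ext
            show sq (dot.mul (p done) (p t)) = (t : G)
            have h1 : sq (p done) = sq dot.one := hp done
            calc sq (dot.mul (p done) (p t))
                = sq (dot.mul dot.one (p t)) := sqmul_congr _ _ _ _ h1 rfl
              _ = sq (p t) := congrArg sq (rone_mul dot _)
              _ = (t : G) := hp t
          mul_one := by
            intro t
            apply Subtype.ext
            show sq (dot.mul (p t) (p done)) = (t : G)
            have h1 : sq (p done) = sq dot.one := hp done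
            calc sq (dot.mul (p t) (p done))
                = sq (dot.mul (p t) dot.one) := sqmul_congr _ _ _ _ rfl h1
              _ = sq (p t) := congrArg sq (rmul_one dot _)
              _ = (t : G) := hp t
          inv_mul_cancel := by
            intro t
            apply Subtype.ext
            show sq (dot.mul (p (dinv t)) (p t)) = sq dot.one
            have h1 : sq (p (dinv t)) = sq (dot.inv (p t)) := hp (dinv t)
            calc sq (dot.mul (p (dinv t)) (p t))
                = sq (dot.mul (dot.inv (p t)) (p t)) := sqmul_congr _ _ _ _ h1 rfl
              _ = sq dot.one := congrArg sq (rinv_mul dot _) } with hdotMdef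
      have hdmulM : ∀ x y : G, dotM.mul ⟨sq x, hmk x⟩ ⟨sq y, hmk y⟩
          = ⟨sq (dot.mul x y), hmk (dot.mul x y)⟩ := hdmul
      have hdinvM : ∀ x : G, dotM.inv ⟨sq x, hmk x⟩ = ⟨sq (dot.inv x), hmk (dot.inv x)⟩ := hdinv
      have hcmulT : ∀ x y : G, circT.mul ⟨sq x, hmk x⟩ ⟨sq y, hmk y⟩
          = ⟨sq (circ.mul x y), hmk (circ.mul x y)⟩ := by
        intro x y
        apply Subtype.ext
        show sq x * sq y = sq (x * y)
        exact (sq_mul x y).symm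
      have hcinvT : ∀ x : G, circT.inv ⟨sq x, hmk x⟩ = ⟨sq (circ.inv x), hmk (circ.inv x)⟩ := by
        intro x
        apply Subtype.ext
        show (sq x)⁻¹ = sq x⁻¹
        exact (sq_inv x).symm
      -- skew brace structure on M
      have hsbT : IsSkewBrace dotM circT := by
        intro s t u
        obtain ⟨x, rfl⟩ := hsurjT s
        obtain ⟨y, rfl⟩ := hsurjT t
        obtain ⟨z, rfl⟩ := hsurjT u
        rw [hdmulM, hcmulT, hcmulT, hcmulT, hdinvM, hdmulM, hdmulM]
        exact Subtype.ext (congrArg sq (hsb x y z))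
      -- cardinality and cyclicity of M
      have hcardT : Nat.card ↥Msub = 2 ^ m := by
        rw [hMsubdef, Nat.card_zpowers]
        have hsqg : sq g = g ^ 2 := by
          show g * g = g ^ 2
          rw [pow_two]
        rw [hsqg, orderOf_pow, hordg]
        have hgcd : Nat.gcd (2 ^ (m + 1)) 2 = 2 := Nat.gcd_eq_right ⟨2 ^ m, by ring⟩
        rw [hgcd, pow_succ, Nat.mul_div_cancel _ (by norm_num)]
      have hcycT : ∃ gT : ↥Msub, ∀ t : ↥Msub, ∃ k : ℤ, t = circT.zpow k gT := by
        refine ⟨⟨sq g, hmk g⟩, ?_⟩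
        intro t
        obtain ⟨k, hk⟩ := Subgroup.mem_zpowers_iff.mp t.2
        refine ⟨k, Subtype.ext ?_⟩
        show (t : G) = ((⟨sq g, hmk g⟩ : ↥Msub) ^ k : ↥Msub)
        rw [SubgroupClass.coe_zpow]
        exact hk.symm
      -- the image subgroup
      set HM : Set ↥Msub := {t : ↥Msub | ∃ h ∈ H, sq h = ↑t} with hHMdef
      have hHM : IsSubgroupOf circT HM := by
        refine ⟨⟨(1 : G), hH.1, sq_one⟩, ?_, ?_⟩
        · rintro t ⟨h1, hh1, he1⟩ t' ⟨h2, hh2, he2⟩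
          refine ⟨h1 * h2, hH.2.1 h1 hh1 h2 hh2, ?_⟩
          show sq (h1 * h2) = (t : G) * (t' : G)
          rw [sq_mul, he1, he2]
        · rintro t ⟨h1, hh1, he1⟩
          refine ⟨h1⁻¹, hH.2.2 h1 hh1, ?_⟩
          show sq h1⁻¹ = (t : G)⁻¹
          rw [sq_inv, he1]
      have hLI := IH circT hcardT hcycT dotM hsbT HM hHM
      -- pull back
      have PP : ∀ x : G, (∃ h ∈ H, sq h = sq x) → x ∈ H := by
        rintro x ⟨h1, hh1, he1⟩
        rcases fib h1 x he1 with rfl | rfl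
        · exact hh1
        · rw [hmulw h1]
          exact hH.2.1 h1 hh1 w hwH
      have hmkHM : ∀ x : G, x ∈ H → (⟨sq x, hmk x⟩ : ↥Msub) ∈ HM := by
        intro x hx
        exact ⟨x, hx, rfl⟩
      constructor
      · refine ⟨?_, ?_, ?_⟩
        · rw [← sb_one_eq dot circ hsb]; exact hH.1
        · intro x hx y hy
          have hmem := hLI.1.2.1 _ (hmkHM x hx) _ (hmkHM y hy)
          rw [hdmulM] at hmem
          obtain ⟨h1, hh1, he1⟩ := hmem
          exact PP _ ⟨h1, hh1, he1⟩
        · intro x hx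
          have hmem := hLI.1.2.2 _ (hmkHM x hx)
          rw [hdinvM] at hmem
          obtain ⟨h1, hh1, he1⟩ := hmem
          exact PP _ ⟨h1, hh1, he1⟩
      · intro σ τ hτ
        have hgam : gammaFun dotM circT ⟨sq σ, hmk σ⟩ ⟨sq τ, hmk τ⟩
            = ⟨sq (gammaFun dot circ σ τ), hmk _⟩ := by
          show dotM.mul (dotM.inv ⟨sq σ, hmk σ⟩) (circT.mul ⟨sq σ, hmk σ⟩ ⟨sq τ, hmk τ⟩)
            = _
          rw [hdinvM, hcmulT, hdmulM]
          rfl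
        have hmem := hLI.2 ⟨sq σ, hmk σ⟩ ⟨sq τ, hmk τ⟩ (hmkHM τ hτ)
        rw [hgam] at hmem
        obtain ⟨h1, hh1, he1⟩ := hmem
        exact PP _ ⟨h1, hh1, he1⟩

end Stmt19Aux


/-- If `(G,∘)` is cyclic of order `2^m`, `m ≥ 1`, then for every skew brace
`(G,·,∘)`, every subgroup of `(G,∘)` is a left ideal of `(G,·,∘)`. -/
theorem stmt19 {G : Type*} [Finite G] (circ : Group G) (m : ℕ)
    (hm : 1 ≤ m) (hcard : Nat.card G = 2 ^ m)
    (hcyc : ∃ g : G, ∀ x : G, ∃ k : ℤ, x = circ.zpow k g) :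
    ∀ dot : Group G, IsSkewBrace dot circ →
      ∀ H : Set G, IsSubgroupOf circ H → IsLeftIdeal dot circ H :=
  Stmt19Aux.aux m circ hcard hcyc
end
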